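/- Let α ∈ ℝ and κ < √2 be real. Define j(w) := w + (w² − 1)^{1/2} for w ∈ ℂ \ [−1, 1], with the branch of the square root such that j(w) > 1 for real w > 1, and define the Szegő function D(z) := ( (z − √2) / j( 1 + 2(z − √2)/(√2 − κ) ) )^{α/2} for z ∈ ℂ \ [κ, √2], using the principal branch of the power. Then: (i) D is holomorphic on ℂ \ [κ, √2]; (ii) for every z ∈ (κ, √2) the one-sided limits D₊(z) := lim_{ε↓0} D(z + iε) and D₋(z) := lim_{ε↓0} D(z − iε) exist and satisfy D₊(z)·D₋(z) = (√2 − z)^α; (iii) lim_{z→∞} D(z) = ( (√2 − κ)/4 )^{α/2}. -/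

import Mathlib

open Filter Topology Set

/-- The conformal map `j(w) = w + (w² - 1)^{1/2}` from `ℂ \ [-1, 1]` to the exterior
of the unit disk, with the branch of the square root (cut on `[-1, 1]`, realized as
`(w-1)^{1/2}(w+1)^{1/2}` with principal branches) for which `j(w) > 1` for real
`w > 1`. -/
noncomputable def jmap (w : ℂ) : ℂ :=
  w + (w - 1) ^ ((1 : ℂ) / 2) * (w + 1) ^ ((1 : ℂ) / 2)

/-- The Szegő function
`D(z) = ((z - √2)/j(1 + 2(z - √2)/(√2 - κ)))^{α/2}`, with the principal branch of
the power. -/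
noncomputable def szego (α κ : ℝ) (z : ℂ) : ℂ :=
  ((z - (Real.sqrt 2 : ℂ)) /
      jmap (1 + 2 * (z - (Real.sqrt 2 : ℂ)) / ((Real.sqrt 2 : ℂ) - (κ : ℂ))))
    ^ ((α : ℂ) / 2)

/-- The segment `[κ, √2]`, viewed as a subset of `ℂ`. -/
noncomputable def seg (κ : ℝ) : Set ℂ :=
  {z : ℂ | z.im = 0 ∧ κ ≤ z.re ∧ z.re ≤ Real.sqrt 2}

section aux
open Complex Real

noncomputable def csqrt (x : ℂ) : ℂ := x ^ ((1:ℂ)/2)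

lemma csqrt_mul_self {x : ℂ} (hx : x ≠ 0) : csqrt x * csqrt x = x := by
  rw [csqrt, ← Complex.cpow_add _ _ hx]; norm_num

lemma csqrt_def {x : ℂ} (hx : x ≠ 0) :
    csqrt x = Complex.exp (Complex.log x * (1/2)) := by
  rw [csqrt, Complex.cpow_def_of_ne_zero hx]

lemma csqrt_re' {x : ℂ} (hx : x ≠ 0) :
    (csqrt x).re = Real.exp ((Real.log (‖x‖))/2) * Real.cos (x.arg / 2) := by
  rw [csqrt_def hx, Complex.exp_re]
  congr 2
  · simp [Complex.log_re]; ring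
  · simp [Complex.log_im]; ring

lemma csqrt_im' {x : ℂ} (hx : x ≠ 0) :
    (csqrt x).im = Real.exp ((Real.log (‖x‖))/2) * Real.sin (x.arg / 2) := by
  rw [csqrt_def hx, Complex.exp_im]
  congr 2
  · simp [Complex.log_re]; ring
  · simp [Complex.log_im]; ring

lemma csqrt_re_nonneg (x : ℂ) : 0 ≤ (csqrt x).re := by
  rcases eq_or_ne x 0 with rfl | hx
  · simp [csqrt, Complex.zero_cpow (by norm_num : (1:ℂ)/2 ≠ 0)]
  rw [csqrt_re' hx]
  apply mul_nonneg (Real.exp_pos _).le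
  apply Real.cos_nonneg_of_mem_Icc
  constructor
  · linarith [Complex.neg_pi_lt_arg x]
  · linarith [Complex.arg_le_pi x]

lemma csqrt_re_pos {x : ℂ} (hx : x.im ≠ 0) : 0 < (csqrt x).re := by
  have hx0 : x ≠ 0 := by intro h; simp [h] at hx
  rw [csqrt_re' hx0]
  apply mul_pos (Real.exp_pos _)
  apply Real.cos_pos_of_mem_Ioo
  constructor
  · linarith [Complex.neg_pi_lt_arg x]
  · have : x.arg ≠ π := by
      intro h
      exact hx (Complex.arg_eq_pi_iff.mp h).2
    have := lt_of_le_of_ne (Complex.arg_le_pi x) this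
    linarith

lemma csqrt_im_pos {x : ℂ} (hx : 0 < x.im) : 0 < (csqrt x).im := by
  have hx0 : x ≠ 0 := by intro h; simp [h] at hx
  rw [csqrt_im' hx0]
  apply mul_pos (Real.exp_pos _)
  apply Real.sin_pos_of_pos_of_lt_pi
  · have : 0 ≤ x.arg := Complex.arg_nonneg_iff.mpr hx.le
    have hne : x.arg ≠ 0 := by
      intro h; exact hx.ne' (Complex.arg_eq_zero_iff.mp h).2
    have := lt_of_le_of_ne this (Ne.symm hne)
    linarith
  · linarith [Complex.arg_le_pi x, Real.pi_pos]

lemma csqrt_im_neg {x : ℂ} (hx : x.im < 0) : (csqrt x).im < 0 := by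
  have hx0 : x ≠ 0 := by intro h; simp [h] at hx
  rw [csqrt_im' hx0]
  have harg : x.arg < 0 := Complex.arg_neg_iff.mpr hx
  have : Real.sin (x.arg/2) < 0 := by
    apply Real.sin_neg_of_neg_of_neg_pi_lt
    · linarith
    · linarith [Complex.neg_pi_lt_arg x]
  nlinarith [Real.exp_pos ((Real.log (‖x‖))/2)]

lemma csqrt_ofReal_nonneg {x : ℝ} (hx : 0 ≤ x) : csqrt (x : ℂ) = (Real.sqrt x : ℂ) := by
  rw [csqrt, (by push_cast; norm_num : ((1:ℂ)/2) = ((1/2 : ℝ) : ℂ)),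
    ← Complex.ofReal_cpow hx, Real.sqrt_eq_rpow]

lemma csqrt_ofReal_neg {x : ℝ} (hx : x < 0) : csqrt (x : ℂ) = (Real.sqrt (-x) : ℂ) * Complex.I := by
  have hx0 : (x:ℂ) ≠ 0 := by exact_mod_cast (ne_of_lt hx)
  rw [csqrt_def hx0]
  rw [Complex.log, Complex.arg_ofReal_of_neg hx]
  have habs : ‖(x:ℂ)‖ = -x := by
    rw [Complex.norm_real, Real.norm_eq_abs, abs_of_neg hx]
  rw [habs]
  have : ((Real.log (-x) : ℂ) + ↑π * Complex.I) * (1/2)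
      = (↑(Real.log (-x) / 2) : ℂ) + ↑(π/2) * Complex.I := by push_cast; ring
  rw [this, Complex.exp_add, Complex.exp_mul_I, ← Complex.ofReal_cos, ← Complex.ofReal_sin,
    Real.cos_pi_div_two, Real.sin_pi_div_two, ← Complex.ofReal_exp]
  have hsq : Real.exp (Real.log (-x) / 2) = Real.sqrt (-x) := by
    rw [Real.sqrt_eq_rpow, Real.rpow_def_of_pos (by linarith : 0 < -x)]
    ring_nf
  rw [hsq]; push_cast; ring

lemma csqrt_im_nonneg {x : ℂ} (hx : x.im = 0) : 0 ≤ (csqrt x).im := by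
  have : x = (x.re : ℂ) := by exact Complex.ext rfl (by simp [hx])
  rcases lt_trichotomy x.re 0 with h | h | h
  · rw [this, csqrt_ofReal_neg h]; simp [Real.sqrt_nonneg]
  · rw [this, h]; simp [csqrt, Complex.zero_cpow (by norm_num : (1:ℂ)/2 ≠ 0)]
  · rw [this, csqrt_ofReal_nonneg h.le]; simp



noncomputable def rad (w : ℂ) : ℂ := csqrt (w - 1) * csqrt (w + 1)
noncomputable def phiJ (w : ℂ) : ℂ := w - rad w

def offSeg (w : ℂ) : Prop := w.im ≠ 0 ∨ 1 < w.re ∨ w.re < -1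

lemma jmap_eq (w : ℂ) : jmap w = w + rad w := rfl

lemma offSeg.sub_ne {w : ℂ} (h : offSeg w) : w - 1 ≠ 0 := by
  intro h0
  have h1 : w = 1 := by linear_combination h0
  subst h1; revert h; simp [offSeg]

lemma offSeg.add_ne {w : ℂ} (h : offSeg w) : w + 1 ≠ 0 := by
  intro h0
  have h1 : w = -1 := by linear_combination h0
  subst h1; revert h; simp [offSeg]

lemma rad_sq {w : ℂ} (h1 : w - 1 ≠ 0) (h2 : w + 1 ≠ 0) : rad w * rad w = w ^ 2 - 1 := by
  have a := csqrt_mul_self h1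
  have b := csqrt_mul_self h2
  rw [rad]
  linear_combination (csqrt (w+1) * csqrt (w+1)) * a + (w - 1) * b

lemma jmap_mul_phi {w : ℂ} (h : offSeg w) : jmap w * phiJ w = 1 := by
  have := rad_sq h.sub_ne h.add_ne
  rw [jmap_eq, phiJ]
  linear_combination -this

lemma jmap_ne_zero {w : ℂ} (h : offSeg w) : jmap w ≠ 0 :=
  left_ne_zero_of_mul_eq_one (jmap_mul_phi h)

lemma phi_eq_inv {w : ℂ} (h : offSeg w) : phiJ w = (jmap w)⁻¹ :=
  eq_inv_of_mul_eq_one_right (jmap_mul_phi h)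

lemma phi_quadratic {w : ℂ} (h : offSeg w) : (phiJ w - 1)^2 = 2*(w-1)*phiJ w := by
  have := rad_sq h.sub_ne h.add_ne
  rw [phiJ]
  linear_combination this

lemma phi_ne_one {w : ℂ} (h : offSeg w) : phiJ w ≠ 1 := by
  intro h1
  have hq := phi_quadratic h
  rw [h1] at hq
  have : w = 1 := by linear_combination (-1/2 : ℂ) * hq
  exact h.sub_ne (by rw [this]; ring)

lemma rad_im_pos {w : ℂ} (hw : 0 < w.im) : 0 < (rad w).im := by
  have h1 : 0 < (csqrt (w-1)).im := csqrt_im_pos (by simpa using hw)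
  have h2 : 0 < (csqrt (w+1)).im := csqrt_im_pos (by simpa using hw)
  have h3 : 0 < (csqrt (w-1)).re := csqrt_re_pos (by simpa using hw.ne')
  have h4 : 0 < (csqrt (w+1)).re := csqrt_re_pos (by simpa using hw.ne')
  rw [rad, Complex.mul_im]
  nlinarith

lemma rad_im_neg {w : ℂ} (hw : w.im < 0) : (rad w).im < 0 := by
  have h1 : (csqrt (w-1)).im < 0 := csqrt_im_neg (by simpa using hw)
  have h2 : (csqrt (w+1)).im < 0 := csqrt_im_neg (by simpa using hw)
  have h3 : 0 < (csqrt (w-1)).re := csqrt_re_pos (by simpa using hw.ne)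
  have h4 : 0 < (csqrt (w+1)).re := csqrt_re_pos (by simpa using hw.ne)
  rw [rad, Complex.mul_im]
  nlinarith

lemma phi_im_neg {w : ℂ} (hw : 0 < w.im) : (phiJ w).im < 0 := by
  have hoff : offSeg w := Or.inl hw.ne'
  have hj : 0 < (jmap w).im := by
    rw [jmap_eq, Complex.add_im]
    have := rad_im_pos hw
    linarith
  rw [phi_eq_inv hoff, Complex.inv_im]
  have hns : 0 < Complex.normSq (jmap w) := by
    rw [Complex.normSq_pos]; exact jmap_ne_zero hoff
  exact div_neg_of_neg_of_pos (by linarith) hns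

lemma phi_im_pos {w : ℂ} (hw : w.im < 0) : 0 < (phiJ w).im := by
  have hoff : offSeg w := Or.inl hw.ne
  have hj : (jmap w).im < 0 := by
    rw [jmap_eq, Complex.add_im]
    have := rad_im_neg hw
    linarith
  rw [phi_eq_inv hoff, Complex.inv_im]
  have hns : 0 < Complex.normSq (jmap w) := by
    rw [Complex.normSq_pos]; exact jmap_ne_zero hoff
  exact div_pos (by linarith) hns

lemma abs_phi_le_one {w : ℂ} (h : offSeg w) : ‖(phiJ w)‖ ≤ 1 := by
  set a := csqrt (w - 1) with ha
  set b := csqrt (w + 1) with hb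
  have haa : a * a = w - 1 := csqrt_mul_self h.sub_ne
  have hbb : b * b = w + 1 := csqrt_mul_self h.add_ne
  have hw : w = (a*a + b*b)/2 := by rw [haa, hbb]; ring
  -- real coordinates
  have hqv : 0 ≤ a.im * b.im := by
    rcases lt_trichotomy w.im 0 with hlt | heq | hgt
    · have := csqrt_im_neg (x := w - 1) (by simpa using hlt)
      have := csqrt_im_neg (x := w + 1) (by simpa using hlt)
      nlinarith
    · have := csqrt_im_nonneg (x := w - 1) (by simpa using heq)
      have := csqrt_im_nonneg (x := w + 1) (by simpa using heq)
      positivity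
    · have := csqrt_im_pos (x := w - 1) (by simpa using hgt)
      have := csqrt_im_pos (x := w + 1) (by simpa using hgt)
      nlinarith
  have hpu : 0 ≤ a.re * b.re := mul_nonneg (csqrt_re_nonneg _) (csqrt_re_nonneg _)
  -- key inequality : normSq (w - a*b) ≤ normSq (w + a*b)
  have hkey : Complex.normSq (w - a*b) ≤ Complex.normSq (w + a*b) := by
    rw [hw]
    simp only [Complex.normSq_apply, Complex.add_re, Complex.add_im, Complex.sub_re,
      Complex.sub_im, Complex.mul_re, Complex.mul_im, Complex.div_ofNat_re,
      Complex.div_ofNat_im]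
    nlinarith [sq_nonneg (a.re*b.re + a.im*b.im), sq_nonneg a.re, sq_nonneg a.im,
      sq_nonneg b.re, sq_nonneg b.im,
      mul_nonneg (mul_nonneg hpu (sq_nonneg a.im)) (sq_nonneg b.im),
      mul_nonneg hpu hqv, mul_nonneg (add_nonneg hpu hqv)
        (add_nonneg (add_nonneg (sq_nonneg a.re) (sq_nonneg a.im))
          (add_nonneg (sq_nonneg b.re) (sq_nonneg b.im)))]
  have hphi : phiJ w = w - a*b := rfl
  have hjm : jmap w = w + a*b := rfl
  have habs : ‖(phiJ w)‖ ≤ ‖(jmap w)‖ := by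
    rw [Complex.norm_def, Complex.norm_def]
    exact Real.sqrt_le_sqrt (by rw [hphi, hjm]; exact hkey)
  have hmul : ‖(jmap w)‖ * ‖(phiJ w)‖ = 1 := by
    rw [← norm_mul, jmap_mul_phi h, norm_one]
  nlinarith [norm_nonneg (phiJ w)]

lemma rad_im_zero {w : ℂ} (him : w.im = 0) (h : 1 < w.re ∨ w.re < -1) : (rad w).im = 0 := by
  have hwre : w = (w.re : ℂ) := Complex.ext rfl (by simp [him])
  have h1 : w - 1 = ((w.re - 1 : ℝ) : ℂ) := Complex.ext (by simp) (by simp [him])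
  have h2 : w + 1 = ((w.re + 1 : ℝ) : ℂ) := Complex.ext (by simp) (by simp [him])
  rcases h with h | h
  · rw [rad, h1, h2, csqrt_ofReal_nonneg (by linarith), csqrt_ofReal_nonneg (by linarith)]
    simp
  · rw [rad, h1, h2, csqrt_ofReal_neg (by linarith), csqrt_ofReal_neg (by linarith)]
    simp [Complex.mul_im]

lemma phi_im_zero {w : ℂ} (him : w.im = 0) (h : 1 < w.re ∨ w.re < -1) : (phiJ w).im = 0 := by
  rw [phiJ, Complex.sub_im, him, rad_im_zero him h]; ring

lemma phi_re_lt_one {w : ℂ} (h : offSeg w) (him : w.im ≠ 0) : (phiJ w).re < 1 := by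
  have hle : (phiJ w).re ≤ 1 := le_trans (Complex.re_le_norm _) (abs_phi_le_one h)
  rcases eq_or_lt_of_le hle with heq | hlt
  · exfalso
    have habs := abs_phi_le_one h
    have hns : Complex.normSq (phiJ w) ≤ 1 := by
      rw [← Complex.sq_norm]; nlinarith [norm_nonneg (phiJ w)]
    have hphiim : (phiJ w).im ≠ 0 := by
      rcases lt_or_gt_of_ne him with h1 | h1
      · exact (phi_im_pos h1).ne'
      · exact (phi_im_neg h1).ne
    rw [Complex.normSq_apply, ← heq] at hns
    nlinarith [sq_nonneg (phiJ w).im, hphiim.lt_or_gt.elim (fun h2 => mul_pos_of_neg_of_neg h2 h2) (fun h2 => mul_pos h2 h2)]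
  · exact hlt

lemma slit_mem {c : ℝ} (hc : 0 < c) {w : ℂ} (h : offSeg w) :
    (c:ℂ)/4 * (phiJ w - 1)^2 ∈ Complex.slitPlane := by
  set u := phiJ w - 1 with hu
  have hc4 : (c:ℂ)/4 * u^2 = ((c/4 : ℝ):ℂ) * (u*u) := by push_cast; ring
  have hre : ((c:ℂ)/4 * u^2).re = c/4 * (u.re*u.re - u.im*u.im) := by
    rw [hc4, Complex.re_ofReal_mul, Complex.mul_re]
  have him' : ((c:ℂ)/4 * u^2).im = c/4 * (u.re*u.im + u.im*u.re) := by
    rw [hc4, Complex.im_ofReal_mul, Complex.mul_im]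
  rcases eq_or_ne w.im 0 with him | him
  · -- real case : u real nonzero
    left
    have h1 : u.im = 0 := by
      rw [hu, Complex.sub_im, phi_im_zero him (by rcases h with h | h; exact absurd him h; exact h)]
      simp
    have h2 : u.re ≠ 0 := by
      intro h2
      apply phi_ne_one h
      have : u = 0 := Complex.ext h2 h1
      rw [hu, sub_eq_zero] at this
      exact this
    rw [hre, h1]
    have : 0 < u.re * u.re := by
      rcases h2.lt_or_gt with h3 | h3
      exacts [mul_pos_of_neg_of_neg h3 h3, mul_pos h3 h3]
    nlinarith
  · -- nonreal case : im ≠ 0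
    right
    rw [him']
    have h1 : u.re < 0 := by
      rw [hu, Complex.sub_re]
      have := phi_re_lt_one h him
      simp only [Complex.one_re]
      linarith
    have h2 : u.im ≠ 0 := by
      rw [hu, Complex.sub_im]
      simp only [Complex.one_im, sub_zero]
      rcases lt_or_gt_of_ne him with h3 | h3
      · exact (phi_im_pos h3).ne'
      · exact (phi_im_neg h3).ne
    rcases h2.lt_or_gt with h3 | h3
    · exact ne_of_gt (by nlinarith [mul_pos_of_neg_of_neg h1 h3])
    · exact ne_of_lt (by nlinarith [mul_pos (neg_pos.mpr h1) h3])

lemma abs_phi_bound {w : ℂ} (h : offSeg w) (hw : 1 ≤ ‖w‖) :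
    ‖(phiJ w)‖ ≤ 1/(2*‖w‖ - 1) := by
  have hsum : jmap w = 2*w - phiJ w := by rw [jmap_eq, phiJ]; ring
  have hmul : ‖(jmap w)‖ * ‖(phiJ w)‖ = 1 := by
    rw [← norm_mul, jmap_mul_phi h, norm_one]
  have hphile := abs_phi_le_one h
  have hlow : 2*‖w‖ - 1 ≤ ‖(jmap w)‖ := by
    rw [hsum]
    have h1 : ‖(2*w)‖ - ‖(phiJ w)‖ ≤ ‖(2*w - phiJ w)‖ := by
      have := abs_le.mp (abs_norm_sub_norm_le (2*w) (phiJ w))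
      linarith [this.2]
    have h2 : ‖(2*w)‖ = 2*‖w‖ := by
      rw [norm_mul]; norm_num
    linarith
  have hpos : 0 < 2*‖w‖ - 1 := by linarith
  rw [le_div_iff₀ hpos]
  calc ‖(phiJ w)‖ * (2*‖w‖ - 1)
      ≤ ‖(phiJ w)‖ * ‖(jmap w)‖ :=
        mul_le_mul_of_nonneg_left hlow (norm_nonneg _)
    _ = 1 := by rw [mul_comm]; exact hmul

lemma eq_of_sq_pos_im {x y : ℂ} (h : x*x = y*y) (hx : 0 < x.im) (hy : 0 < y.im) : x = y := by
  rcases mul_self_eq_mul_self_iff.mp h with h1 | h1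
  · exact h1
  · exfalso
    rw [h1] at hx
    simp only [Complex.neg_im] at hx
    linarith

lemma rad_neg_eq {w : ℂ} (h : w.re < -1) : rad w = -(csqrt (1 - w) * csqrt (-1 - w)) := by
  have h1 : w - 1 ≠ 0 := by
    intro h0; have : w = 1 := by linear_combination h0
    rw [this] at h; norm_num at h
  have h2 : w + 1 ≠ 0 := by
    intro h0; have : w = -1 := by linear_combination h0
    rw [this] at h; simp at h
  have h1' : (1:ℂ) - w ≠ 0 := fun h0 => h1 (by linear_combination -h0)
  have h2' : (-1:ℂ) - w ≠ 0 := fun h0 => h2 (by linear_combination -h0)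
  have hsq : rad w * rad w = (-(csqrt (1 - w) * csqrt (-1 - w))) * (-(csqrt (1 - w) * csqrt (-1 - w))) := by
    have e1 := csqrt_mul_self h1'
    have e2 := csqrt_mul_self h2'
    rw [rad_sq h1 h2]
    have : -(csqrt (1 - w) * csqrt (-1 - w)) * -(csqrt (1 - w) * csqrt (-1 - w))
        = (csqrt (1-w) * csqrt (1-w)) * (csqrt (-1-w) * csqrt (-1-w)) := by ring
    rw [this, e1, e2]; ring
  rcases lt_trichotomy w.im 0 with hlt | heq | hgt
  · -- lower half plane : both sides have negative imaginary part
    have hx : (rad w).im < 0 := rad_im_neg hlt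
    have hy : (-(csqrt (1 - w) * csqrt (-1 - w))).im < 0 := by
      have i1 : 0 < (1 - w).im := by simp [Complex.sub_im]; linarith
      have i2 : 0 < (-1 - w).im := by simp [Complex.sub_im]; linarith
      have a1 := csqrt_im_pos i1
      have a2 := csqrt_im_pos i2
      have b1 := csqrt_re_pos i1.ne'
      have b2 := csqrt_re_pos i2.ne'
      simp only [Complex.neg_im, Complex.mul_im]
      nlinarith
    have := eq_of_sq_pos_im (x := -rad w) (y := csqrt (1 - w) * csqrt (-1 - w))
      (by linear_combination hsq) (by simpa using hx) (by simpa using neg_pos.mpr hy |>.trans_eq (by simp))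
    linear_combination -this
  · -- real case
    have hwre : w = (w.re : ℂ) := Complex.ext rfl (by simp [heq])
    have e1 : w - 1 = ((w.re - 1 : ℝ) : ℂ) := Complex.ext (by simp) (by simp [heq])
    have e2 : w + 1 = ((w.re + 1 : ℝ) : ℂ) := Complex.ext (by simp) (by simp [heq])
    have e3 : 1 - w = ((1 - w.re : ℝ) : ℂ) := Complex.ext (by simp) (by simp [heq])
    have e4 : -1 - w = ((-1 - w.re : ℝ) : ℂ) := Complex.ext (by simp) (by simp [heq])
    rw [rad, e1, e2, e3, e4, csqrt_ofReal_neg (by linarith), csqrt_ofReal_neg (by linarith),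
      csqrt_ofReal_nonneg (by linarith), csqrt_ofReal_nonneg (by linarith)]
    have : -(w.re - 1) = 1 - w.re := by ring
    rw [this]
    have : -(w.re + 1) = -1 - w.re := by ring
    rw [this]
    ring_nf
    rw [Complex.I_sq]
    ring
  · -- upper half plane
    have hx : 0 < (rad w).im := rad_im_pos hgt
    have hy : 0 < (-(csqrt (1 - w) * csqrt (-1 - w))).im := by
      have i1 : (1 - w).im < 0 := by simp [Complex.sub_im]; linarith
      have i2 : (-1 - w).im < 0 := by simp [Complex.sub_im]; linarith
      have a1 := csqrt_im_neg i1
      have a2 := csqrt_im_neg i2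
      have b1 := csqrt_re_pos i1.ne
      have b2 := csqrt_re_pos i2.ne
      simp only [Complex.neg_im, Complex.mul_im]
      nlinarith
    exact eq_of_sq_pos_im hsq hx hy

open Filter Topology Set

noncomputable def Wmap (κ : ℝ) (z : ℂ) : ℂ :=
  1 + 2 * (z - (Real.sqrt 2 : ℂ)) / ((Real.sqrt 2 : ℂ) - (κ : ℂ))

lemma szego_eq (α κ : ℝ) (z : ℂ) :
    szego α κ z = ((z - (Real.sqrt 2:ℂ)) / jmap (Wmap κ z)) ^ ((α:ℂ)/2) := rfl

lemma hcpos {κ : ℝ} (hκ : κ < Real.sqrt 2) : 0 < Real.sqrt 2 - κ := by linarith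

lemma cast_c {κ : ℝ} : ((Real.sqrt 2 - κ : ℝ) : ℂ) = (Real.sqrt 2 : ℂ) - (κ : ℂ) := by
  push_cast; ring

lemma cast_c_ne {κ : ℝ} (hκ : κ < Real.sqrt 2) : (Real.sqrt 2 : ℂ) - (κ : ℂ) ≠ 0 := by
  rw [← cast_c]
  exact_mod_cast (hcpos hκ).ne'

lemma Wmap_eq' {κ : ℝ} (hκ : κ < Real.sqrt 2) (z : ℂ) :
    Wmap κ z = 1 + ((2/(Real.sqrt 2 - κ) : ℝ):ℂ) * (z - (Real.sqrt 2:ℂ)) := by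
  have hne := cast_c_ne hκ
  rw [Wmap]
  push_cast
  field_simp

lemma Wmap_re {κ : ℝ} (hκ : κ < Real.sqrt 2) (z : ℂ) :
    (Wmap κ z).re = 1 + 2/(Real.sqrt 2 - κ) * (z.re - Real.sqrt 2) := by
  rw [Wmap_eq' hκ]
  simp only [Complex.add_re, Complex.one_re, Complex.re_ofReal_mul, Complex.sub_re,
    Complex.ofReal_re]

lemma Wmap_im {κ : ℝ} (hκ : κ < Real.sqrt 2) (z : ℂ) :
    (Wmap κ z).im = 2/(Real.sqrt 2 - κ) * z.im := by
  rw [Wmap_eq' hκ]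
  simp only [Complex.add_im, Complex.one_im, Complex.im_ofReal_mul, Complex.sub_im,
    Complex.ofReal_im, sub_zero, zero_add]

lemma z_sub_eq {κ : ℝ} (hκ : κ < Real.sqrt 2) (z : ℂ) :
    z - (Real.sqrt 2:ℂ) = ((Real.sqrt 2:ℂ) - (κ:ℂ)) * (Wmap κ z - 1) / 2 := by
  have hne := cast_c_ne hκ
  rw [Wmap]
  field_simp
  ring

lemma off_of_compl {κ : ℝ} (hκ : κ < Real.sqrt 2) {z : ℂ} (hz : z ∈ (seg κ)ᶜ) :
    offSeg (Wmap κ z) := by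
  have hc := hcpos hκ
  simp only [seg, Set.mem_compl_iff, Set.mem_setOf_eq, not_and, not_le] at hz
  rcases eq_or_ne z.im 0 with him | him
  · have := hz him
    rcases lt_or_ge z.re κ with h | h
    · right; right
      rw [Wmap_re hκ]
      have h2 : z.re - Real.sqrt 2 < κ - Real.sqrt 2 := by linarith
      have h3 : 2/(Real.sqrt 2 - κ) * (z.re - Real.sqrt 2) < 2/(Real.sqrt 2 - κ) * (κ - Real.sqrt 2) :=
        mul_lt_mul_of_pos_left h2 (by positivity)
      have h4 : 2/(Real.sqrt 2 - κ) * (κ - Real.sqrt 2) = -2 := by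
        field_simp; ring
      linarith
    · right; left
      have h5 := this h
      rw [Wmap_re hκ]
      have : 0 < 2/(Real.sqrt 2 - κ) * (z.re - Real.sqrt 2) := by
        apply mul_pos (by positivity); linarith
      linarith
  · left
    rw [Wmap_im hκ]
    intro h0
    rcases mul_eq_zero.mp h0 with h1 | h1
    · have : 2/(Real.sqrt 2 - κ) ≠ 0 := by positivity
      exact this h1
    · exact him h1

lemma fval {κ : ℝ} (hκ : κ < Real.sqrt 2) {z : ℂ} (hoff : offSeg (Wmap κ z)) :
    (z - (Real.sqrt 2:ℂ)) / jmap (Wmap κ z)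
      = ((Real.sqrt 2 - κ : ℝ):ℂ)/4 * (phiJ (Wmap κ z) - 1)^2 := by
  rw [z_sub_eq hκ, cast_c]
  rw [div_eq_iff (jmap_ne_zero hoff)]
  have h1 := jmap_mul_phi hoff
  have h2 := phi_quadratic hoff
  set w := Wmap κ z
  set C := (Real.sqrt 2 : ℂ) - (κ:ℂ)
  linear_combination (-(C/4) * jmap w) * h2 + (-(C/2) * (w-1)) * h1

lemma isClosed_seg {κ : ℝ} : IsClosed (seg κ) := by
  have : seg κ = Complex.im ⁻¹' {0} ∩ (Complex.re ⁻¹' Set.Icc κ (Real.sqrt 2)) := by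
    ext z; simp [seg, Set.mem_Icc, and_assoc]
  rw [this]
  exact (isClosed_singleton.preimage Complex.continuous_im).inter
    (isClosed_Icc.preimage Complex.continuous_re)

lemma Wmap_differentiable {κ : ℝ} {z : ℂ} : DifferentiableAt ℂ (Wmap κ) z := by
  unfold Wmap
  apply (differentiableAt_const _).add
  exact ((differentiableAt_const _).mul ((differentiableAt_fun_id.sub (differentiableAt_const _)))).div_const _

lemma jmapW_differentiable {κ : ℝ} {z : ℂ} (hoff : offSeg (Wmap κ z)) :
    DifferentiableAt ℂ (fun z => jmap (Wmap κ z)) z := by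
  have hW : DifferentiableAt ℂ (Wmap κ) z := Wmap_differentiable
  rcases eq_or_ne (Wmap κ z).im 0 with him | him
  · rcases hoff with h | h | h
    · exact absurd him h
    · have h1 : DifferentiableAt ℂ (fun z => (Wmap κ z - 1) ^ ((1:ℂ)/2)) z := by
        apply DifferentiableAt.cpow (hW.sub (differentiableAt_const _)) (differentiableAt_const _)
        left; show 0 < (Wmap κ z - 1).re; simp only [Complex.sub_re, Complex.one_re]; linarith
      have h2 : DifferentiableAt ℂ (fun z => (Wmap κ z + 1) ^ ((1:ℂ)/2)) z := by
        apply DifferentiableAt.cpow (hW.add (differentiableAt_const _)) (differentiableAt_const _)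
        left; show 0 < (Wmap κ z + 1).re; simp only [Complex.add_re, Complex.one_re]; linarith
      exact hW.add (h1.mul h2)
    · have hopen : IsOpen {z : ℂ | (Wmap κ z).re < -1} := by
        have : Continuous fun z : ℂ => (Wmap κ z).re := by
          apply Complex.continuous_re.comp
          unfold Wmap; fun_prop
        exact isOpen_lt this continuous_const
      have heq : (fun z => jmap (Wmap κ z)) =ᶠ[nhds z]
          (fun z => Wmap κ z - csqrt (1 - Wmap κ z) * csqrt (-1 - Wmap κ z)) := by
        filter_upwards [hopen.mem_nhds h] with y hy
        have := rad_neg_eq hy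
        rw [jmap_eq, this]; ring
      rw [heq.differentiableAt_iff]
      have h1 : DifferentiableAt ℂ (fun z => csqrt (1 - Wmap κ z)) z := by
        apply DifferentiableAt.cpow ((differentiableAt_const _).sub hW) (differentiableAt_const _)
        left; show 0 < (1 - Wmap κ z).re; simp only [Complex.sub_re, Complex.one_re]; linarith
      have h2 : DifferentiableAt ℂ (fun z => csqrt (-1 - Wmap κ z)) z := by
        apply DifferentiableAt.cpow ((differentiableAt_const _).sub hW) (differentiableAt_const _)
        left; show 0 < (-1 - Wmap κ z).re; simp only [Complex.sub_re, Complex.neg_re, Complex.one_re]; linarith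
      exact hW.sub (h1.mul h2)
  · have h1 : DifferentiableAt ℂ (fun z => (Wmap κ z - 1) ^ ((1:ℂ)/2)) z := by
      apply DifferentiableAt.cpow (hW.sub (differentiableAt_const _)) (differentiableAt_const _)
      right; simpa using him
    have h2 : DifferentiableAt ℂ (fun z => (Wmap κ z + 1) ^ ((1:ℂ)/2)) z := by
      apply DifferentiableAt.cpow (hW.add (differentiableAt_const _)) (differentiableAt_const _)
      right; simpa using him
    exact hW.add (h1.mul h2)

lemma partI {κ : ℝ} (hκ : κ < Real.sqrt 2) (α : ℝ) :
    DifferentiableOn ℂ (szego α κ) (seg κ)ᶜ := by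
  intro z hz
  apply DifferentiableAt.differentiableWithinAt
  have hoff := off_of_compl hκ hz
  have hf : DifferentiableAt ℂ (fun z => (z - (Real.sqrt 2:ℂ)) / jmap (Wmap κ z)) z :=
    (differentiableAt_fun_id.sub (differentiableAt_const _)).div (jmapW_differentiable hoff)
      (jmap_ne_zero hoff)
  have hmem : (z - (Real.sqrt 2:ℂ)) / jmap (Wmap κ z) ∈ Complex.slitPlane := by
    rw [fval hκ hoff]
    exact slit_mem (hcpos hκ) hoff
  have : DifferentiableAt ℂ (fun z => ((z - (Real.sqrt 2:ℂ)) / jmap (Wmap κ z)) ^ ((α:ℂ)/2)) z :=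
    hf.cpow (differentiableAt_const _) hmem
  exact this.congr_of_eventuallyEq (by filter_upwards with y using (szego_eq α κ y))

lemma off_of_abs {w : ℂ} (hw : 1 < ‖w‖) : offSeg w := by
  rcases eq_or_ne w.im 0 with him | him
  · have hwre : w = (w.re : ℂ) := Complex.ext rfl (by simp [him])
    rw [hwre, Complex.norm_real, Real.norm_eq_abs] at hw
    rcases lt_abs.mp hw with h | h
    · exact Or.inr (Or.inl h)
    · exact Or.inr (Or.inr (by linarith))
  · exact Or.inl him

lemma abs_Wmap_atTop {κ : ℝ} (hκ : κ < Real.sqrt 2) :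
    Tendsto (fun z => ‖(Wmap κ z)‖) (cocompact ℂ) atTop := by
  have hc := hcpos hκ
  set r : ℝ := 2/(Real.sqrt 2 - κ) with hr
  have hrpos : 0 < r := by positivity
  have habs : Tendsto (fun z : ℂ => ‖z‖) (cocompact ℂ) atTop := by
    simpa using tendsto_norm_cocompact_atTop (E := ℂ)
  have hlin : Tendsto (fun z : ℂ => r * ‖z‖ - (1 + r * Real.sqrt 2)) (cocompact ℂ) atTop :=
    tendsto_atTop_add_const_right _ _ (habs.const_mul_atTop hrpos)
  apply tendsto_atTop_mono _ hlin
  intro z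
  have h1 : Wmap κ z = ((r:ℝ):ℂ) * z + (1 - ((r:ℝ):ℂ) * (Real.sqrt 2:ℂ)) := by
    rw [Wmap_eq' hκ]; ring
  have h2 : ‖(((r:ℝ):ℂ) * z)‖ ≤ ‖(Wmap κ z)‖ + ‖(1 - ((r:ℝ):ℂ) * (Real.sqrt 2:ℂ))‖ := by
    have e : ((r:ℝ):ℂ) * z = Wmap κ z - (1 - ((r:ℝ):ℂ) * (Real.sqrt 2:ℂ)) := by rw [h1]; ring
    rw [e]
    have t := norm_sub_le_norm_sub_add_norm_sub (Wmap κ z) 0 (1 - ((r:ℝ):ℂ) * (Real.sqrt 2:ℂ))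
    simp only [sub_zero, zero_sub, norm_neg] at t
    exact t
  have h3 : ‖(((r:ℝ):ℂ) * z)‖ = r * ‖z‖ := by
    rw [norm_mul, Complex.norm_real, Real.norm_eq_abs, abs_of_pos hrpos]
  have h4 : ‖(1 - ((r:ℝ):ℂ) * (Real.sqrt 2:ℂ))‖ ≤ 1 + r * Real.sqrt 2 := by
    have t1 : ‖(1 - ((r:ℝ):ℂ) * (Real.sqrt 2:ℂ))‖
        ≤ ‖(1:ℂ)‖ + ‖(((r:ℝ):ℂ) * (Real.sqrt 2:ℂ))‖ := by
      have := norm_sub_le_norm_sub_add_norm_sub (1:ℂ) 0 (((r:ℝ):ℂ) * (Real.sqrt 2:ℂ))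
      simpa using this
    have t2 : ‖(((r:ℝ):ℂ) * (Real.sqrt 2:ℂ))‖ = r * Real.sqrt 2 := by
      rw [norm_mul, Complex.norm_real, Real.norm_eq_abs, Complex.norm_real, Real.norm_eq_abs,
        _root_.abs_of_pos hrpos, _root_.abs_of_nonneg (Real.sqrt_nonneg 2)]
    rw [norm_one, t2] at t1
    exact t1
  linarith [h2, h3, h4]

lemma phiW_tendsto_zero {κ : ℝ} (hκ : κ < Real.sqrt 2) :
    Tendsto (fun z => phiJ (Wmap κ z)) (cocompact ℂ) (nhds 0) := by
  have hW := abs_Wmap_atTop hκ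
  rw [tendsto_zero_iff_norm_tendsto_zero]
  have hbound : ∀ᶠ z in cocompact ℂ, ‖(phiJ (Wmap κ z))‖ ≤ (2 * ‖(Wmap κ z)‖ - 1)⁻¹ := by
    filter_upwards [hW.eventually_ge_atTop 2] with z hz
    have hoff : offSeg (Wmap κ z) := off_of_abs (by linarith)
    simpa [one_div] using abs_phi_bound hoff (by linarith)
  have hinv : Tendsto (fun z => (2 * ‖(Wmap κ z)‖ - 1)⁻¹) (cocompact ℂ) (nhds 0) := by
    apply tendsto_inv_atTop_zero.comp
    exact tendsto_atTop_add_const_right _ _ (hW.const_mul_atTop (by norm_num : (0:ℝ) < 2))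
  apply squeeze_zero' _ hbound hinv
  filter_upwards with z using by simpa using norm_nonneg _

lemma partIII {κ : ℝ} (hκ : κ < Real.sqrt 2) (α : ℝ) :
    Tendsto (szego α κ) (cocompact ℂ)
      (nhds ((((Real.sqrt 2 - κ) / 4) ^ (α / 2) : ℝ) : ℂ)) := by
  have hc := hcpos hκ
  set c : ℝ := Real.sqrt 2 - κ with hcdef
  -- limit of the base
  have hbase : Tendsto (fun z => ((c:ℝ):ℂ)/4 * (phiJ (Wmap κ z) - 1)^2) (cocompact ℂ)
      (nhds (((c:ℝ):ℂ)/4)) := by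
    have h1 : Tendsto (fun z => phiJ (Wmap κ z) - 1) (cocompact ℂ) (nhds (0 - 1)) :=
      (phiW_tendsto_zero hκ).sub_const 1
    have h2 : Tendsto (fun z => (phiJ (Wmap κ z) - 1)^2) (cocompact ℂ) (nhds ((0-1)^2)) :=
      h1.pow 2
    have h3 := h2.const_mul (((c:ℝ):ℂ)/4)
    simpa using h3
  -- membership in slit plane
  have hmem : ((c:ℝ):ℂ)/4 ∈ Complex.slitPlane := by
    left
    have : (((c:ℝ):ℂ)/4).re = c/4 := by
      rw [show ((c:ℝ):ℂ)/4 = ((c/4 : ℝ):ℂ) by push_cast; ring, Complex.ofReal_re]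
    rw [this]; positivity
  have hcont : Tendsto (fun z => (((c:ℝ):ℂ)/4 * (phiJ (Wmap κ z) - 1)^2) ^ ((α:ℂ)/2))
      (cocompact ℂ) (nhds ((((c:ℝ):ℂ)/4) ^ ((α:ℂ)/2))) :=
    hbase.cpow tendsto_const_nhds hmem
  have hfinal : Tendsto (szego α κ) (cocompact ℂ) (nhds ((((c:ℝ):ℂ)/4) ^ ((α:ℂ)/2))) := by
    apply hcont.congr'
    filter_upwards [(abs_Wmap_atTop hκ).eventually_ge_atTop 2] with z hz
    have hoff : offSeg (Wmap κ z) := off_of_abs (by linarith)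
    exact (by rw [szego_eq, fval hκ hoff] : szego α κ z = _).symm
  have hval : (((c:ℝ):ℂ)/4) ^ ((α:ℂ)/2) = (((c/4) ^ (α/2) : ℝ) : ℂ) := by
    rw [show ((c:ℝ):ℂ)/4 = ((c/4 : ℝ):ℂ) by push_cast; ring,
      show ((α:ℂ)/2) = ((α/2 : ℝ):ℂ) by push_cast; ring]
    rw [← Complex.ofReal_cpow (by positivity)]
  rw [← hval]
  exact hfinal

lemma slit_im_ne {c : ℝ} (hc : 0 < c) {w : ℂ} (h : offSeg w) (him : w.im ≠ 0) :
    ((c:ℂ)/4 * (phiJ w - 1)^2).im ≠ 0 := by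
  set u := phiJ w - 1 with hu
  have hc4 : (c:ℂ)/4 * u^2 = ((c/4 : ℝ):ℂ) * (u*u) := by push_cast; ring
  have him' : ((c:ℂ)/4 * u^2).im = c/4 * (u.re*u.im + u.im*u.re) := by
    rw [hc4, Complex.im_ofReal_mul, Complex.mul_im]
  rw [him']
  have h1 : u.re < 0 := by
    rw [hu, Complex.sub_re]
    have := phi_re_lt_one h him
    simp only [Complex.one_re]
    linarith
  have h2 : u.im ≠ 0 := by
    rw [hu, Complex.sub_im]
    simp only [Complex.one_im, sub_zero]
    rcases lt_or_gt_of_ne him with h3 | h3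
    · exact (phi_im_pos h3).ne'
    · exact (phi_im_neg h3).ne
  rcases h2.lt_or_gt with h3 | h3
  · exact ne_of_gt (by nlinarith [mul_pos_of_neg_of_neg h1 h3])
  · exact ne_of_lt (by nlinarith [mul_pos (neg_pos.mpr h1) h3])

lemma csqrt_cwa_neg {p : ℂ} (hre : p.re < 0) (him : p.im = 0) :
    ContinuousWithinAt csqrt {v : ℂ | 0 ≤ v.im} p := by
  have hp : p ≠ 0 := fun h => by rw [h] at hre; simp at hre
  have hlog := Complex.continuousWithinAt_log_of_re_neg_of_im_zero hre him
  have hexp : ContinuousWithinAt (fun v => Complex.exp (Complex.log v * (1/2)))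
      {v : ℂ | 0 ≤ v.im} p :=
    Complex.continuous_exp.continuousAt.comp_continuousWithinAt
      (hlog.mul continuousWithinAt_const)
  apply hexp.congr_of_eventuallyEq
  · have hne : ∀ᶠ v in nhds p, v ≠ 0 := eventually_ne_nhds hp
    filter_upwards [eventually_nhdsWithin_of_eventually_nhds hne] with v hv
    rw [csqrt_def hv]
  · rw [csqrt_def hp]

lemma partII {κ : ℝ} (hκ : κ < Real.sqrt 2) (α : ℝ) {x : ℝ} (hx : x ∈ Set.Ioo κ (Real.sqrt 2)) :
    ∃ Dp Dm : ℂ,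
      Tendsto (fun ε : ℝ => szego α κ ((x : ℂ) + (ε : ℂ) * Complex.I))
        (𝓝[>] 0) (nhds Dp) ∧
      Tendsto (fun ε : ℝ => szego α κ ((x : ℂ) - (ε : ℂ) * Complex.I))
        (𝓝[>] 0) (nhds Dm) ∧
      Dp * Dm = (((Real.sqrt 2 - x) ^ α : ℝ) : ℂ) := by
  obtain ⟨hx1, hx2⟩ := hx
  have hc := hcpos hκ
  set c : ℝ := Real.sqrt 2 - κ with hcdef
  set t : ℝ := 1 + 2*(x - Real.sqrt 2)/c with htdef
  have ht2 : t < 1 := by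
    rw [htdef]
    have : 2*(x - Real.sqrt 2)/c < 0 := div_neg_of_neg_of_pos (by linarith) hc
    linarith
  have ht1 : -1 < t := by
    rw [htdef]
    have h0 : 0 < 2*(x - κ)/c := div_pos (by linarith) hc
    have : 1 + 2*(x - Real.sqrt 2)/c + 1 = 2*(x - κ)/c := by field_simp; ring
    linarith
  set q : ℝ := Real.sqrt (1 - t) * Real.sqrt (t + 1) with hqdef
  have hqpos : 0 < q := mul_pos (Real.sqrt_pos.mpr (by linarith)) (Real.sqrt_pos.mpr (by linarith))
  have hq2 : q^2 = (1 - t)*(t + 1) := by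
    rw [hqdef, mul_pow, Real.sq_sqrt (by linarith), Real.sq_sqrt (by linarith)]
  -- the path
  set zf : ℝ → ℂ := fun ε => (x : ℂ) + (ε : ℂ) * Complex.I with hzf
  have hzre : ∀ ε : ℝ, (zf ε).re = x := by intro ε; simp [hzf]
  have hzim : ∀ ε : ℝ, (zf ε).im = ε := by intro ε; simp [hzf]
  have hWre : ∀ ε : ℝ, (Wmap κ (zf ε)).re = t := by
    intro ε; rw [Wmap_re hκ, hzre, htdef]; ring
  have hWim : ∀ ε : ℝ, (Wmap κ (zf ε)).im = 2/c * ε := by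
    intro ε; rw [Wmap_im hκ, hzim]
  -- limit of W along the path, within the upper half plane
  have hWlim : Tendsto (fun ε : ℝ => Wmap κ (zf ε)) (𝓝[>] 0) (nhds ((t:ℝ):ℂ)) := by
    have hWc : Continuous fun ε : ℝ => Wmap κ (zf ε) := by
      unfold Wmap; rw [hzf]; fun_prop
    have := (hWc.tendsto 0).mono_left (nhdsWithin_le_nhds (s := Set.Ioi (0:ℝ)))
    convert this using 2
    apply Complex.ext
    · rw [Complex.ofReal_re, hWre]
    · rw [Complex.ofReal_im, hWim]; ring
  have hWsub : Tendsto (fun ε : ℝ => Wmap κ (zf ε) - 1) (𝓝[>] 0)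
      (𝓝[{v : ℂ | 0 ≤ v.im}] ((t - 1 : ℝ):ℂ)) := by
    rw [tendsto_nhdsWithin_iff]
    constructor
    · have := hWlim.sub (tendsto_const_nhds (x := (1:ℂ)))
      convert this using 2
      push_cast; ring
    · filter_upwards [self_mem_nhdsWithin] with ε (hε : 0 < ε)
      simp only [Set.mem_setOf_eq, Complex.sub_im, Complex.one_im, sub_zero]
      rw [hWim]
      positivity
  have hlim1 : Tendsto (fun ε : ℝ => csqrt (Wmap κ (zf ε) - 1)) (𝓝[>] 0)
      (nhds (csqrt ((t - 1 : ℝ):ℂ))) := by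
    have hcwa := csqrt_cwa_neg (p := ((t - 1 : ℝ):ℂ))
      (by rw [Complex.ofReal_re]; linarith) (by rw [Complex.ofReal_im])
    exact hcwa.tendsto.comp hWsub
  have hlim2 : Tendsto (fun ε : ℝ => csqrt (Wmap κ (zf ε) + 1)) (𝓝[>] 0)
      (nhds (csqrt ((t + 1 : ℝ):ℂ))) := by
    have hmem : ((t + 1 : ℝ):ℂ) ∈ Complex.slitPlane := by
      left; rw [Complex.ofReal_re]; linarith
    have hct : ContinuousAt csqrt ((t + 1 : ℝ):ℂ) := continuousAt_cpow_const hmem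
    apply hct.tendsto.comp
    have := hWlim.add (tendsto_const_nhds (x := (1:ℂ)))
    convert this using 2
    push_cast; ring
  -- the limit of jmap ∘ W
  set j0 : ℂ := ((t:ℝ):ℂ) + ((q:ℝ):ℂ) * Complex.I with hj0def
  have hcs1 : csqrt ((t - 1 : ℝ):ℂ) = ((Real.sqrt (1 - t) : ℝ):ℂ) * Complex.I := by
    rw [csqrt_ofReal_neg (by linarith)]
    norm_num
  have hcs2 : csqrt ((t + 1 : ℝ):ℂ) = ((Real.sqrt (t + 1) : ℝ):ℂ) := by
    rw [csqrt_ofReal_nonneg (by linarith)]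
  have hjlim : Tendsto (fun ε : ℝ => jmap (Wmap κ (zf ε))) (𝓝[>] 0) (nhds j0) := by
    have := hWlim.add (hlim1.mul hlim2)
    rw [hcs1, hcs2] at this
    have e : ((t:ℝ):ℂ) + ((Real.sqrt (1-t) : ℝ):ℂ) * Complex.I * ((Real.sqrt (t+1) : ℝ):ℂ) = j0 := by
      rw [hj0def, hqdef]; push_cast; ring
    rw [e] at this
    exact this
  have hj0re : j0.re = t := by rw [hj0def]; simp
  have hj0im : j0.im = q := by rw [hj0def]; simp
  have hj0ns : Complex.normSq j0 = 1 := by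
    rw [Complex.normSq_apply, hj0re, hj0im]
    nlinarith [hq2]
  have hj0 : j0 ≠ 0 := by
    intro h; rw [h] at hj0ns; simp at hj0ns
  -- limit of the base function
  set f0 : ℂ := ((x:ℝ):ℂ) - ((Real.sqrt 2 : ℝ):ℂ) with hf0def
  have hflim : Tendsto (fun ε : ℝ => (zf ε - (Real.sqrt 2:ℂ)) / jmap (Wmap κ (zf ε)))
      (𝓝[>] 0) (nhds (f0 / j0)) := by
    apply Tendsto.div _ hjlim hj0
    have : Continuous fun ε : ℝ => zf ε - (Real.sqrt 2:ℂ) := by rw [hzf]; fun_prop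
    have h2 := (this.tendsto 0).mono_left (nhdsWithin_le_nhds (s := Set.Ioi (0:ℝ)))
    convert h2 using 2
    rw [hf0def, hzf]
    push_cast; ring
  have hf0im : 0 < (f0 / j0).im := by
    have e1 : f0 / j0 = ((x - Real.sqrt 2 : ℝ):ℂ) * j0⁻¹ := by
      rw [hf0def]; push_cast; ring
    rw [e1, Complex.im_ofReal_mul, Complex.inv_im, hj0im, hj0ns]
    have : 0 < (Real.sqrt 2 - x) * q := mul_pos (by linarith) hqpos
    calc (0:ℝ) < (Real.sqrt 2 - x) * q := this
      _ = (x - Real.sqrt 2) * (-q / 1) := by ring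
  have hf0mem : f0 / j0 ∈ Complex.slitPlane := Or.inr hf0im.ne'
  set Dp : ℂ := (f0 / j0) ^ ((α:ℂ)/2) with hDpdef
  have hDp : Tendsto (fun ε : ℝ => szego α κ (zf ε)) (𝓝[>] 0) (nhds Dp) := by
    have := hflim.cpow (tendsto_const_nhds (x := (α:ℂ)/2)) hf0mem
    apply this.congr
    intro ε
    rw [szego_eq]
  -- conjugation relation
  have hconj : ∀ ε : ℝ, 0 < ε →
      szego α κ ((x:ℂ) - (ε:ℂ) * Complex.I) = (starRingEnd ℂ) (szego α κ (zf ε)) := by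
    intro ε hε
    have hzc : (x:ℂ) - (ε:ℂ) * Complex.I = (starRingEnd ℂ) (zf ε) := by
      rw [hzf]; apply Complex.ext <;> simp
    have hWc : Wmap κ ((starRingEnd ℂ) (zf ε)) = (starRingEnd ℂ) (Wmap κ (zf ε)) := by
      apply Complex.ext
      · rw [Complex.conj_re, Wmap_re hκ, Wmap_re hκ, Complex.conj_re]
      · rw [Complex.conj_im, Wmap_im hκ, Wmap_im hκ, Complex.conj_im]; ring
    have him : (Wmap κ (zf ε)).im ≠ 0 := by rw [hWim]; positivity
    have harg1 : (Wmap κ (zf ε) - 1).arg ≠ Real.pi := by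
      intro h
      have := (Complex.arg_eq_pi_iff.mp h).2
      rw [Complex.sub_im, Complex.one_im, sub_zero] at this
      exact him this
    have harg2 : (Wmap κ (zf ε) + 1).arg ≠ Real.pi := by
      intro h
      have := (Complex.arg_eq_pi_iff.mp h).2
      rw [Complex.add_im, Complex.one_im, add_zero] at this
      exact him this
    have hhalf : (starRingEnd ℂ) ((1:ℂ)/2) = (1:ℂ)/2 := by norm_num [Complex.ext_iff]
    have hjc : jmap (Wmap κ ((starRingEnd ℂ) (zf ε))) = (starRingEnd ℂ) (jmap (Wmap κ (zf ε))) := by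
      rw [hWc, jmap, jmap]
      rw [show (starRingEnd ℂ) (Wmap κ (zf ε)) - 1 = (starRingEnd ℂ) (Wmap κ (zf ε) - 1) by
        rw [map_sub, map_one]]
      rw [show (starRingEnd ℂ) (Wmap κ (zf ε)) + 1 = (starRingEnd ℂ) (Wmap κ (zf ε) + 1) by
        rw [map_add, map_one]]
      rw [Complex.conj_cpow _ _ harg1, Complex.conj_cpow _ _ harg2, hhalf, map_add, map_mul]
    have hoff : offSeg (Wmap κ (zf ε)) := Or.inl him
    have hargf : ((zf ε - (Real.sqrt 2:ℂ)) / jmap (Wmap κ (zf ε))).arg ≠ Real.pi := by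
      intro h
      have h2 := (Complex.arg_eq_pi_iff.mp h).2
      rw [fval hκ hoff] at h2
      exact slit_im_ne hc hoff him h2
    have halpha : (starRingEnd ℂ) ((α:ℂ)/2) = (α:ℂ)/2 := by
      rw [map_div₀, Complex.conj_ofReal, map_ofNat]
    rw [hzc, szego_eq, szego_eq]
    rw [show (starRingEnd ℂ) (zf ε) - (Real.sqrt 2:ℂ) = (starRingEnd ℂ) (zf ε - (Real.sqrt 2:ℂ)) by
      rw [map_sub, Complex.conj_ofReal]]
    rw [hjc, ← map_div₀]
    rw [Complex.conj_cpow _ _ hargf, halpha]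
  have hDm : Tendsto (fun ε : ℝ => szego α κ ((x:ℂ) - (ε:ℂ) * Complex.I)) (𝓝[>] 0)
      (nhds ((starRingEnd ℂ) Dp)) := by
    have hcont : Continuous (starRingEnd ℂ) := Complex.continuous_conj
    have := (hcont.tendsto Dp).comp hDp
    apply this.congr'
    filter_upwards [self_mem_nhdsWithin] with ε (hε : 0 < ε)
    exact (hconj ε hε).symm
  refine ⟨Dp, (starRingEnd ℂ) Dp, hDp, hDm, ?_⟩
  -- the product identity
  have habsj0 : ‖j0‖ = 1 := by
    rw [Complex.norm_def, hj0ns, Real.sqrt_one]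
  have hf0ne : f0 / j0 ≠ 0 := Complex.slitPlane_ne_zero hf0mem
  have habsf0 : ‖(f0 / j0)‖ = Real.sqrt 2 - x := by
    rw [norm_div, habsj0, div_one, hf0def]
    rw [show ((x:ℝ):ℂ) - ((Real.sqrt 2 : ℝ):ℂ) = ((x - Real.sqrt 2 : ℝ):ℂ) by push_cast; ring]
    rw [Complex.norm_real, Real.norm_eq_abs, abs_of_neg (by linarith)]
    ring
  have halpha2 : ((α:ℂ)/2) = ((α/2 : ℝ):ℂ) := by push_cast; ring
  have habsDp : ‖Dp‖ = (Real.sqrt 2 - x) ^ (α/2) := by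
    rw [hDpdef, halpha2, Complex.norm_cpow_of_ne_zero hf0ne]
    rw [Complex.ofReal_re, Complex.ofReal_im, habsf0]
    simp [Real.exp_zero]
  rw [Complex.mul_conj]
  congr 1
  rw [Complex.normSq_eq_norm_sq, habsDp]
  rw [← Real.rpow_natCast ((Real.sqrt 2 - x) ^ (α/2)) 2, ← Real.rpow_mul (by linarith)]
  norm_num

end aux

/-- Properties of the Szegő function: it is holomorphic off `[κ, √2]`, its one-sided
boundary values on `(κ, √2)` exist and satisfy `D₊(z)·D₋(z) = (√2 - z)^α`, and
`D(z) → ((√2 - κ)/4)^{α/2}` as `z → ∞`. -/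
theorem szego_function_properties (α κ : ℝ) (hκ : κ < Real.sqrt 2) :
    DifferentiableOn ℂ (szego α κ) (seg κ)ᶜ ∧
    (∀ z : ℝ, z ∈ Ioo κ (Real.sqrt 2) →
      ∃ Dp Dm : ℂ,
        Tendsto (fun ε : ℝ => szego α κ ((z : ℂ) + (ε : ℂ) * Complex.I))
          (𝓝[>] 0) (𝓝 Dp) ∧
        Tendsto (fun ε : ℝ => szego α κ ((z : ℂ) - (ε : ℂ) * Complex.I))
          (𝓝[>] 0) (𝓝 Dm) ∧
        Dp * Dm = (((Real.sqrt 2 - z) ^ α : ℝ) : ℂ)) ∧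
    Tendsto (szego α κ) (cocompact ℂ)
      (𝓝 ((((Real.sqrt 2 - κ) / 4) ^ (α / 2) : ℝ) : ℂ)) :=
  ⟨partI hκ α, fun z hz => partII hκ α hz, partIII hκ α⟩
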